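/- arXiv:1706.04892 — 6 statements merged into one kernel-verified Lean document; each statement's English description precedes it below -/
import Mathlib

section
/- Let X be an n×m real matrix, S an m×m matrix, and α > 0. If the operator norm of (X Xᵀ + α I)^{-1/2} (X Xᵀ − X S Sᵀ Xᵀ) (X Xᵀ + α I)^{-1/2} is at most ε, then (1−ε) X Xᵀ − ε α I ⪯ X S Sᵀ Xᵀ ⪯ (1+ε) X Xᵀ + ε α I in the positive semidefinite (Loewner) order. -/
open Matrix
open scoped Matrix.Norms.L2Operator

/-- The positive semidefinite square root of a positive semidefinite matrix
(removed from Mathlib; restored with its December 2024 definition). -/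
noncomputable def Matrix.PosSemidef.sqrt {n 𝕜 : Type*} [Fintype n] [RCLike 𝕜] [PartialOrder 𝕜] [DecidableEq n]
    {A : Matrix n n 𝕜} (hA : A.PosSemidef) : Matrix n n 𝕜 :=
  (hA.1.eigenvectorUnitary : Matrix n n 𝕜) *
    diagonal ((fun x : ℝ => (x : 𝕜)) ∘ (√·) ∘ hA.1.eigenvalues) *
    (star hA.1.eigenvectorUnitary : Matrix n n 𝕜)

lemma Matrix.PosSemidef.sqrt_mul_self {n : Type*} [Fintype n] [DecidableEq n]
    {A : Matrix n n ℝ} (hA : A.PosSemidef) : hA.sqrt * hA.sqrt = A := by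
  have hU : (star hA.1.eigenvectorUnitary : Matrix n n ℝ) * (hA.1.eigenvectorUnitary : Matrix n n ℝ) = 1 :=
    Unitary.coe_star_mul_self _
  have hD : diagonal ((fun x : ℝ => (x : ℝ)) ∘ (√·) ∘ hA.1.eigenvalues) *
      diagonal ((fun x : ℝ => (x : ℝ)) ∘ (√·) ∘ hA.1.eigenvalues) =
      diagonal (RCLike.ofReal ∘ hA.1.eigenvalues) := by
    rw [diagonal_mul_diagonal]
    congr 1; funext i
    simp [Real.mul_self_sqrt (hA.eigenvalues_nonneg i)]
  conv_rhs => rw [hA.1.spectral_theorem, Unitary.conjStarAlgAut_apply]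
  simp only [Matrix.PosSemidef.sqrt]
  simp only [Matrix.mul_assoc]
  rw [← Matrix.mul_assoc (star (hA.1.eigenvectorUnitary : Matrix n n ℝ)) (hA.1.eigenvectorUnitary : Matrix n n ℝ),
    hU, Matrix.one_mul, ← Matrix.mul_assoc (diagonal _) (diagonal _)]
  simp [diagonal_mul_diagonal, Function.comp_def, Real.mul_self_sqrt, hA.eigenvalues_nonneg]

lemma Matrix.PosSemidef.sq_sqrt {n : Type*} [Fintype n] [DecidableEq n]
    {A : Matrix n n ℝ} (hA : A.PosSemidef) : hA.sqrt ^ 2 = A := by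
  rw [sq, hA.sqrt_mul_self]

lemma Matrix.PosSemidef.posSemidef_sqrt {n : Type*} [Fintype n] [DecidableEq n]
    {A : Matrix n n ℝ} (hA : A.PosSemidef) : hA.sqrt.PosSemidef := by
  have hD : (diagonal ((fun x : ℝ => (x : ℝ)) ∘ (√·) ∘ hA.1.eigenvalues)).PosSemidef :=
    Matrix.PosSemidef.diagonal (fun i => Real.sqrt_nonneg _)
  have := hD.mul_mul_conjTranspose_same (hA.1.eigenvectorUnitary : Matrix n n ℝ)
  simpa [Matrix.PosSemidef.sqrt, Unitary.coe_star, Matrix.star_eq_conjTranspose] using this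

lemma aux_psd {k : ℕ} {C : Matrix (Fin k) (Fin k) ℝ} (hC : C.IsHermitian) {ε : ℝ}
    (h : ‖C‖ ≤ ε) : (ε • (1 : Matrix (Fin k) (Fin k) ℝ) - C).PosSemidef := by
  refine Matrix.PosSemidef.of_dotProduct_mulVec_nonneg (Matrix.IsHermitian.sub (by ext i j; simp [Matrix.one_apply]; split <;> split <;> simp_all) hC) fun x => ?_
  set y : EuclideanSpace ℝ (Fin k) := WithLp.toLp 2 x with hy
  have hnz : ‖(EuclideanSpace.equiv (Fin k) ℝ).symm (C *ᵥ x)‖ ≤ ‖C‖ * ‖y‖ :=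
    C.l2_opNorm_mulVec y
  have hinner : x ⬝ᵥ (C *ᵥ x) =
      inner ℝ y (WithLp.toLp 2 (C *ᵥ x)) := by
    rw [EuclideanSpace.inner_toLp_toLp, star_trivial, dotProduct_comm]
  have hself : x ⬝ᵥ x = ‖y‖ ^ 2 := by
    have := EuclideanSpace.inner_toLp_toLp (𝕜 := ℝ) x x
    rw [star_trivial, real_inner_self_eq_norm_sq] at this
    simpa using this.symm
  have h1 : x ⬝ᵥ (C *ᵥ x) ≤ ε * (x ⬝ᵥ x) := by
    rw [hinner, hself]
    calc inner ℝ y (WithLp.toLp 2 (C *ᵥ x))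
        ≤ ‖y‖ * ‖WithLp.toLp 2 (C *ᵥ x)‖ := real_inner_le_norm _ _
      _ ≤ ‖y‖ * (‖C‖ * ‖y‖) := by
          refine mul_le_mul_of_nonneg_left ?_ (norm_nonneg _)
          exact hnz
      _ ≤ ε * ‖y‖ ^ 2 := by
          have hC0 : (0:ℝ) ≤ ‖C‖ := norm_nonneg _
          nlinarith [norm_nonneg y, le_trans hC0 h]
  simp only [star_trivial, sub_mulVec, dotProduct_sub, smul_mulVec, one_mulVec,
    dotProduct_smul, smul_eq_mul]
  linarith

theorem stmt_2 {n m : ℕ} (X : Matrix (Fin n) (Fin m) ℝ) (S : Matrix (Fin m) (Fin m) ℝ)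
    (α ε : ℝ) (hα : 0 < α) (hε : 0 ≤ ε)
    (hA : (X * Xᵀ + α • (1 : Matrix (Fin n) (Fin n) ℝ)).PosSemidef)
    (h : ‖hA.sqrt⁻¹ * (X * Xᵀ - X * S * Sᵀ * Xᵀ) * hA.sqrt⁻¹‖ ≤ ε) :
    (X * S * Sᵀ * Xᵀ - ((1 - ε) • (X * Xᵀ) - (ε * α) • (1 : Matrix (Fin n) (Fin n) ℝ))).PosSemidef ∧
    ((1 + ε) • (X * Xᵀ) + (ε * α) • (1 : Matrix (Fin n) (Fin n) ℝ) - X * S * Sᵀ * Xᵀ).PosSemidef := by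
  have hXt : Xᵀ = Xᴴ := by ext i j; simp
  have hXX : (X * Xᵀ).PosSemidef := by
    rw [hXt]; exact posSemidef_self_mul_conjTranspose X
  have hone : ((α : ℝ) • (1 : Matrix (Fin n) (Fin n) ℝ)).PosDef := by
    have : (α • (1 : Matrix (Fin n) (Fin n) ℝ)) = diagonal (fun _ => α) := by
      ext i j; simp [Matrix.one_apply, Matrix.diagonal_apply]
    rw [this]
    exact Matrix.PosDef.diagonal (fun _ => hα)
  have hB : (X * Xᵀ + α • (1 : Matrix (Fin n) (Fin n) ℝ)).PosDef := Matrix.PosDef.posSemidef_add hXX hone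
  -- sqrt is invertible
  have hdet : IsUnit hA.sqrt.det := by
    have hsq : hA.sqrt.det ^ 2 = (X * Xᵀ + α • (1 : Matrix (Fin n) (Fin n) ℝ)).det := by
      rw [← Matrix.det_pow, hA.sq_sqrt]
    have hpos : (0:ℝ) < (X * Xᵀ + α • (1 : Matrix (Fin n) (Fin n) ℝ)).det := hB.det_pos
    refine isUnit_iff_ne_zero.2 (fun h0 => ?_)
    rw [h0] at hsq; simp at hsq; linarith
  have h1 : hA.sqrt * hA.sqrt⁻¹ = 1 := Matrix.mul_nonsing_inv _ hdet
  have h2 : hA.sqrt⁻¹ * hA.sqrt = 1 := Matrix.nonsing_inv_mul _ hdet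
  set M := X * Xᵀ - X * S * Sᵀ * Xᵀ with hM
  have hXS : (X * S * Sᵀ * Xᵀ).PosSemidef := by
    have : X * S * Sᵀ * Xᵀ = (X * S) * (X * S)ᴴ := by
      rw [Matrix.conjTranspose_mul, ← hXt]
      have : Sᴴ = Sᵀ := by ext i j; simp
      rw [this, ← Matrix.mul_assoc]
    rw [this]; exact posSemidef_self_mul_conjTranspose (X * S)
  have hMH : M.IsHermitian := hXX.1.sub hXS.1
  have hsH : hA.sqrt⁻¹.IsHermitian := hA.posSemidef_sqrt.1.inv
  have hDH : (hA.sqrt⁻¹ * M * hA.sqrt⁻¹).IsHermitian := by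
    unfold Matrix.IsHermitian
    rw [Matrix.conjTranspose_mul, Matrix.conjTranspose_mul, hsH.eq, hMH.eq, Matrix.mul_assoc]
  have hDH' : (-(hA.sqrt⁻¹ * M * hA.sqrt⁻¹)).IsHermitian := hDH.neg
  have P1 := aux_psd hDH h
  have P2 := aux_psd (ε := ε) hDH' (by rwa [norm_neg])
  have key : ∀ (D : Matrix (Fin n) (Fin n) ℝ), D.PosSemidef →
      (hA.sqrt * D * hA.sqrt).PosSemidef := by
    intro D hD
    have := hD.mul_mul_conjTranspose_same hA.sqrt
    rwa [hA.posSemidef_sqrt.1.eq] at this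
  have conj : hA.sqrt * (hA.sqrt⁻¹ * M * hA.sqrt⁻¹) * hA.sqrt = M := by
    rw [← Matrix.mul_assoc, ← Matrix.mul_assoc, h1, Matrix.one_mul, Matrix.mul_assoc, h2,
      Matrix.mul_one]
  have conjB : hA.sqrt * ((1 : Matrix (Fin n) (Fin n) ℝ)) * hA.sqrt
      = X * Xᵀ + α • (1 : Matrix (Fin n) (Fin n) ℝ) := by
    rw [Matrix.mul_one, hA.sqrt_mul_self]
  constructor
  · have := key _ P1
    have e : hA.sqrt * (ε • (1:Matrix (Fin n) (Fin n) ℝ) - hA.sqrt⁻¹ * M * hA.sqrt⁻¹) * hA.sqrt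
        = X * S * Sᵀ * Xᵀ - ((1 - ε) • (X * Xᵀ) - (ε * α) • (1 : Matrix (Fin n) (Fin n) ℝ)) := by
      rw [Matrix.mul_sub, Matrix.sub_mul, Matrix.mul_smul, Matrix.smul_mul, conj, conjB, hM]
      module
    rwa [e] at this
  · have := key _ P2
    have e : hA.sqrt * (ε • (1:Matrix (Fin n) (Fin n) ℝ) - -(hA.sqrt⁻¹ * M * hA.sqrt⁻¹)) * hA.sqrt
        = (1 + ε) • (X * Xᵀ) + (ε * α) • (1 : Matrix (Fin n) (Fin n) ℝ) - X * S * Sᵀ * Xᵀ := by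
      rw [sub_neg_eq_add, Matrix.mul_add, Matrix.add_mul, Matrix.mul_smul, Matrix.smul_mul,
        conj, conjB, hM]
      module
    rwa [e] at this
end

section
/- Let K be an n×n positive semidefinite matrix with operator norm ‖K‖ and α > 0, and define the effective dimension d_eff(α) = Tr(K (K + α I)⁻¹). Then log det(K/α + I) ≤ d_eff(α) · (1 + log(‖K‖/α + 1)). -/
open Matrix
open scoped Matrix.Norms.L2Operator

lemma scalar_key {x M α : ℝ} (hα : 0 < α) (hx : 0 ≤ x) (hxM : x ≤ M) :
    Real.log (x / α + 1) ≤ x / (x + α) * (1 + Real.log (M / α + 1)) := by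
  have hxα : 0 < x + α := by linarith
  have h1 : Real.log (x / α + 1) ≤ x / α := by
    have := Real.log_le_sub_one_of_pos (x := x / α + 1) (by positivity)
    linarith
  have h2 : α / (x + α) * Real.log (x / α + 1) ≤ x / (x + α) := by
    have := mul_le_mul_of_nonneg_left h1 (le_of_lt (div_pos hα hxα))
    calc α / (x + α) * Real.log (x / α + 1) ≤ α / (x + α) * (x / α) := this
      _ = x / (x + α) := by field_simp
  have h3 : Real.log (x / α + 1) ≤ Real.log (M / α + 1) := by
    apply Real.log_le_log (by positivity)
    have : x / α ≤ M / α := by gcongr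
    linarith
  have h4 : 0 ≤ x / (x + α) := by positivity
  have h5 : x / (x + α) + α / (x + α) = 1 := by field_simp
  have hL : x / (x + α) * Real.log (x / α + 1) + α / (x + α) * Real.log (x / α + 1)
      = Real.log (x / α + 1) := by rw [← add_mul, h5, one_mul]
  nlinarith [mul_le_mul_of_nonneg_left h3 h4]

lemma eig_le {n : ℕ} (K : Matrix (Fin n) (Fin n) ℝ) (hK : K.PosSemidef) (i : Fin n) :
    hK.1.eigenvalues i ≤ ‖K‖ := by
  have hv : ‖hK.1.eigenvectorBasis i‖ = 1 := hK.1.eigenvectorBasis.orthonormal.1 i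
  have h := K.l2_opNorm_mulVec (hK.1.eigenvectorBasis i)
  erw [hK.1.mulVec_eigenvectorBasis i] at h
  rw [hv, mul_one] at h
  have heq : (EuclideanSpace.equiv (Fin n) ℝ).symm (hK.1.eigenvalues i • ⇑(hK.1.eigenvectorBasis i))
      = hK.1.eigenvalues i • hK.1.eigenvectorBasis i := rfl
  rw [heq, norm_smul, hv, mul_one, Real.norm_eq_abs] at h
  exact le_trans (le_abs_self _) h


theorem stmt_4 {n : ℕ} (K : Matrix (Fin n) (Fin n) ℝ) (hK : K.PosSemidef)
    (α : ℝ) (hα : 0 < α) :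
    Real.log ((α⁻¹ • K + (1 : Matrix (Fin n) (Fin n) ℝ)).det) ≤
      (K * (K + α • (1 : Matrix (Fin n) (Fin n) ℝ))⁻¹).trace *
        (1 + Real.log (‖K‖ / α + 1)) := by
  have hA := hK.1
  set U : Matrix (Fin n) (Fin n) ℝ := (hA.eigenvectorUnitary : Matrix (Fin n) (Fin n) ℝ) with hUdef
  set l : Fin n → ℝ := hA.eigenvalues with hldef
  have hUU : U * star U = 1 := (Matrix.mem_unitaryGroup_iff).mp hA.eigenvectorUnitary.2
  have hUU' : star U * U = 1 := (Matrix.mem_unitaryGroup_iff').mp hA.eigenvectorUnitary.2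
  have hspec : K = U * diagonal l * star U := by simpa using hA.spectral_theorem
  have hln : ∀ i, 0 ≤ l i := fun i => hK.eigenvalues_nonneg i
  have hlα : ∀ i, l i + α ≠ 0 := fun i => by have := hln i; positivity
  -- determinant
  have h1 : α⁻¹ • K + 1 = U * (diagonal (fun i => α⁻¹ * l i + 1)) * star U := by
    have : diagonal (fun i => α⁻¹ * l i + 1) = α⁻¹ • diagonal l + 1 := by
      ext i j
      rcases eq_or_ne i j with h|h <;> simp [diagonal_apply, Matrix.one_apply, h]
    rw [this, Matrix.mul_add, Matrix.add_mul, Matrix.mul_one, hUU, Matrix.mul_smul,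
      Matrix.smul_mul, ← hspec]
  have hdet : (α⁻¹ • K + 1).det = ∏ i, (α⁻¹ * l i + 1) := by
    rw [h1, det_mul_right_comm, hUU, Matrix.one_mul, det_diagonal]
  -- trace
  have h2 : K + α • 1 = U * diagonal (fun i => l i + α) * star U := by
    have : diagonal (fun i => l i + α) = diagonal l + α • 1 := by
      ext i j
      rcases eq_or_ne i j with h|h <;> simp [diagonal_apply, Matrix.one_apply, h]
    rw [this, Matrix.mul_add, Matrix.add_mul, Matrix.mul_smul, Matrix.smul_mul, Matrix.mul_one,
      hUU, ← hspec]
  have hinv : (K + α • 1)⁻¹ = U * diagonal (fun i => (l i + α)⁻¹) * star U := by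
    apply Matrix.inv_eq_right_inv
    rw [h2]
    calc U * diagonal (fun i => l i + α) * star U * (U * diagonal (fun i => (l i + α)⁻¹) * star U)
        = U * diagonal (fun i => l i + α) * (star U * U) * diagonal (fun i => (l i + α)⁻¹)
            * star U := by noncomm_ring
      _ = U * (diagonal (fun i => l i + α) * diagonal (fun i => (l i + α)⁻¹)) * star U := by
          rw [hUU']; noncomm_ring
      _ = 1 := by
          rw [diagonal_mul_diagonal]
          have : (fun i => (l i + α) * (l i + α)⁻¹) = fun _ : Fin n => (1:ℝ) := by
            funext i; exact mul_inv_cancel₀ (hlα i)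
          rw [this, diagonal_one, Matrix.mul_one, hUU]
  have htrace : (K * (K + α • 1)⁻¹).trace = ∑ i, l i / (l i + α) := by
    rw [hinv]
    conv_lhs => rw [hspec]
    have : U * diagonal l * star U * (U * diagonal (fun i => (l i + α)⁻¹) * star U)
        = U * (diagonal l * diagonal (fun i => (l i + α)⁻¹)) * star U := by
      calc U * diagonal l * star U * (U * diagonal (fun i => (l i + α)⁻¹) * star U)
          = U * diagonal l * (star U * U) * diagonal (fun i => (l i + α)⁻¹) * star U := by
            noncomm_ring
        _ = _ := by rw [hUU']; noncomm_ring
    rw [this, trace_mul_cycle, ← Matrix.mul_assoc, hUU', Matrix.one_mul, diagonal_mul_diagonal,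
      trace_diagonal]
    simp [div_eq_mul_inv]
  rw [htrace, hdet, Real.log_prod (fun i _ => by have := hln i; positivity),
    Finset.sum_mul]
  apply Finset.sum_le_sum
  intro i _
  rw [inv_mul_eq_div]
  exact scalar_key hα (hln i) (eig_le K hK i)
end

section
/- Let φ₁,…,φ_T be vectors in a real inner product space with ‖φ_t‖ ≤ 1 for all t, let Φ_t denote the operator whose columns are φ₁,…,φ_t, let α > 0, and define the online ridge leverage scores τ_{t,t} = φ_tᵀ (Φ_t Φ_tᵀ + α I)⁻¹ φ_t. Then Σ_{t=1}^T τ_{t,t} ≤ log det(K_T/α + I), where K_T is the T×T Gram matrix with entries [K_T]_{ij} = ⟨φ_i, φ_j⟩. -/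
open Matrix

private lemma psd_vmv {D : ℕ} (u : Fin D → ℝ) : (vecMulVec u u).PosSemidef := by
  have h := Matrix.posSemidef_conjTranspose_mul_self (Matrix.replicateRow Unit u)
  rw [vecMulVec_eq Unit]
  convert h using 1
  ext i j
  simp

private lemma det_sub_vmv {D : ℕ} (A : Matrix (Fin D) (Fin D) ℝ) (hA : A.PosDef)
    (u : Fin D → ℝ) :
    (A - vecMulVec u u).det = A.det * (1 - u ⬝ᵥ (A⁻¹ *ᵥ u)) := by
  have hdet : IsUnit A.det := isUnit_iff_ne_zero.2 hA.det_pos.ne'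
  have h1 : A - vecMulVec u u = A + replicateCol Unit u * replicateRow Unit (-u) := by
    rw [vecMulVec_eq Unit, sub_eq_add_neg]
    congr 1
    ext i j
    simp [Matrix.mul_apply]
  rw [h1, det_add_replicateCol_mul_replicateRow hdet]
  congr 1
  have h2 : A⁻¹ * replicateCol Unit u = replicateCol Unit (A⁻¹ *ᵥ u) := (replicateCol_mulVec _ _).symm
  rw [Matrix.mul_assoc, h2, det_unique]
  simp [neg_dotProduct, sub_eq_add_neg]

theorem stmt_6 {T D : ℕ} (φ : Fin T → Fin D → ℝ)
    (hφ : ∀ t, φ t ⬝ᵥ φ t ≤ 1) (α : ℝ) (hα : 0 < α)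
    (K : Matrix (Fin T) (Fin T) ℝ) (hK : ∀ i j, K i j = φ i ⬝ᵥ φ j) :
    ∑ t, φ t ⬝ᵥ
        (((∑ s ∈ Finset.univ.filter (fun s => s ≤ t), vecMulVec (φ s) (φ s))
            + α • (1 : Matrix (Fin D) (Fin D) ℝ))⁻¹ *ᵥ φ t) ≤
      Real.log ((α⁻¹ • K + (1 : Matrix (Fin T) (Fin T) ℝ)).det) := by
  classical
  set B : ℕ → Matrix (Fin D) (Fin D) ℝ := fun n =>
    (∑ s ∈ Finset.univ.filter (fun s : Fin T => (s : ℕ) < n), vecMulVec (φ s) (φ s))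
      + α • (1 : Matrix (Fin D) (Fin D) ℝ) with hBdef
  have hPD : ∀ n, (B n).PosDef := by
    intro n
    rw [hBdef]
    apply Matrix.PosDef.posSemidef_add
    · exact Finset.sum_induction _ Matrix.PosSemidef
        (fun a b ha hb => Matrix.PosSemidef.add ha hb)
        Matrix.PosSemidef.zero (fun s _ => psd_vmv (φ s))
    · rw [smul_one_eq_diagonal]
      exact (posDef_diagonal_iff).2 fun _ => hα
  set g : ℕ → ℝ := fun n => Real.log (B n).det with hgdef
  -- each term of the statement's sum involves B (t+1)
  have hmat : ∀ t : Fin T,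
      ((∑ s ∈ Finset.univ.filter (fun s => s ≤ t), vecMulVec (φ s) (φ s))
        + α • (1 : Matrix (Fin D) (Fin D) ℝ)) = B ((t : ℕ) + 1) := by
    intro t
    have hf : (Finset.univ.filter (fun s : Fin T => s ≤ t))
        = Finset.univ.filter (fun s : Fin T => (s : ℕ) < (t : ℕ) + 1) := by
      ext s
      simp only [Finset.mem_filter, Finset.mem_univ, true_and, Fin.le_def, Nat.lt_succ_iff]
    rw [hBdef, hf]
  -- recursion step
  have hstep : ∀ t : Fin T, B (t : ℕ) = B ((t : ℕ) + 1) - vecMulVec (φ t) (φ t) := by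
    intro t
    have hfil : (Finset.univ.filter (fun s : Fin T => (s : ℕ) < (t : ℕ) + 1))
        = insert t (Finset.univ.filter (fun s : Fin T => (s : ℕ) < (t : ℕ))) := by
      ext s
      simp only [Finset.mem_filter, Finset.mem_insert, Finset.mem_univ, true_and, Fin.ext_iff]
      omega
    have hnot : t ∉ Finset.univ.filter (fun s : Fin T => (s : ℕ) < (t : ℕ)) := by simp
    rw [hBdef]
    simp only
    rw [hfil, Finset.sum_insert hnot]
    abel
  -- per-step bound
  have hkey : ∀ t : Fin T,
      φ t ⬝ᵥ ((B ((t : ℕ) + 1))⁻¹ *ᵥ φ t) ≤ g ((t : ℕ) + 1) - g (t : ℕ) := by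
    intro t
    set x : ℝ := φ t ⬝ᵥ ((B ((t : ℕ) + 1))⁻¹ *ᵥ φ t) with hxdef
    have hdet : (B (t : ℕ)).det = (B ((t : ℕ) + 1)).det * (1 - x) := by
      rw [hstep t]
      exact det_sub_vmv _ (hPD _) _
    have hd1 : 0 < (B (t : ℕ)).det := (hPD _).det_pos
    have hd2 : 0 < (B ((t : ℕ) + 1)).det := (hPD _).det_pos
    have h1x : 0 < 1 - x := by
      rw [hdet] at hd1
      nlinarith
    have hlog : Real.log (1 - x) ≤ -x := by
      have := Real.log_le_sub_one_of_pos h1x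
      linarith
    have : g (t : ℕ) = g ((t : ℕ) + 1) + Real.log (1 - x) := by
      rw [hgdef]
      simp only
      rw [hdet, Real.log_mul hd2.ne' h1x.ne']
    linarith [this, hlog]
  -- sum up and telescope
  have hsum : (∑ t, φ t ⬝ᵥ
        (((∑ s ∈ Finset.univ.filter (fun s => s ≤ t), vecMulVec (φ s) (φ s))
            + α • (1 : Matrix (Fin D) (Fin D) ℝ))⁻¹ *ᵥ φ t)) ≤ g T - g 0 := by
    have h1 : (∑ t, φ t ⬝ᵥ
        (((∑ s ∈ Finset.univ.filter (fun s => s ≤ t), vecMulVec (φ s) (φ s))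
            + α • (1 : Matrix (Fin D) (Fin D) ℝ))⁻¹ *ᵥ φ t))
        ≤ ∑ t : Fin T, (g ((t : ℕ) + 1) - g (t : ℕ)) := by
      apply Finset.sum_le_sum
      intro t _
      rw [hmat t]
      exact hkey t
    have h2 : (∑ t : Fin T, (g ((t : ℕ) + 1) - g (t : ℕ))) = g T - g 0 := by
      rw [Fin.sum_univ_eq_sum_range (fun n => g (n + 1) - g n)]
      exact Finset.sum_range_sub g T
    linarith
  refine hsum.trans (le_of_eq ?_)
  -- identify g T - g 0 with the stated log-determinant
  set M : Matrix (Fin T) (Fin D) ℝ := Matrix.of φ with hMdef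
  have hS : (∑ s ∈ Finset.univ.filter (fun s : Fin T => (s : ℕ) < T),
      vecMulVec (φ s) (φ s)) = Mᵀ * M := by
    have : (Finset.univ.filter (fun s : Fin T => (s : ℕ) < T)) = Finset.univ := by
      ext s; simp [s.is_lt]
    rw [this]
    ext i j
    simp [Matrix.mul_apply, vecMulVec_apply, Matrix.sum_apply, hMdef]
  have hKM : K = M * Mᵀ := by
    ext i j
    simp [hK, Matrix.mul_apply, dotProduct, hMdef]
  have hWA : (α⁻¹ • K + (1 : Matrix (Fin T) (Fin T) ℝ)).det
      = (α⁻¹ • (Mᵀ * M) + (1 : Matrix (Fin D) (Fin D) ℝ)).det := by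
    rw [hKM]
    have e1 : α⁻¹ • (M * Mᵀ) = M * (α⁻¹ • Mᵀ) := by
      rw [Matrix.mul_smul]
    have e2 : α⁻¹ • (Mᵀ * M) = (α⁻¹ • Mᵀ) * M := by
      rw [Matrix.smul_mul]
    rw [e1, e2, det_mul_add_one_comm]
  have hscale : α⁻¹ • (Mᵀ * M) + (1 : Matrix (Fin D) (Fin D) ℝ) = α⁻¹ • B T := by
    rw [hBdef]
    simp only [hS]
    rw [smul_add, smul_smul, inv_mul_cancel₀ hα.ne', one_smul]
  rw [hWA, hscale, Matrix.det_smul]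
  have hdT : 0 < (B T).det := (hPD T).det_pos
  have hg0 : g 0 = Real.log (α ^ (Fintype.card (Fin D))) := by
    rw [hgdef]
    simp only
    have : B 0 = α • (1 : Matrix (Fin D) (Fin D) ℝ) := by
      rw [hBdef]
      simp
    rw [this, Matrix.det_smul, det_one, mul_one]
  rw [Real.log_mul (by positivity) hdT.ne', hg0, Real.log_pow, Real.log_pow, Real.log_inv]
  rw [hgdef]
  ring
end

section
/- Let x₁,…,x_T be vectors in ℝ^d and define V_t = Σ_{s=1}^t x_s x_sᵀ + I. Then Σ_{t=1}^T x_tᵀ V_t⁻¹ x_t ≤ log det(V_T). -/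
open Matrix

lemma vecMulVec_posSemidef {d : ℕ} (v : Fin d → ℝ) :
    (vecMulVec v v).PosSemidef := by
  rw [vecMulVec_eq (Fin 1)]
  have := Matrix.posSemidef_self_mul_conjTranspose (Matrix.replicateCol (Fin 1) v)
  exact this

lemma key_step {d : ℕ} (A : Matrix (Fin d) (Fin d) ℝ) (hA : A.PosDef) (v : Fin d → ℝ) :
    v ⬝ᵥ (A + vecMulVec v v)⁻¹ *ᵥ v ≤
      Real.log (A + vecMulVec v v).det - Real.log A.det := by
  set B := A + vecMulVec v v with hB
  have hBpd : B.PosDef := hA.add_posSemidef (vecMulVec_posSemidef v)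
  have hdetA : 0 < A.det := hA.det_pos
  have hdetB : 0 < B.det := hBpd.det_pos
  -- matrix determinant lemma: det A = det B * (1 - v ⬝ᵥ B⁻¹ *ᵥ v)
  have hAeq : A = B + Matrix.replicateCol (Fin 1) (-v) * Matrix.replicateRow (Fin 1) v := by
    rw [hB]
    ext i j
    simp [vecMulVec, Matrix.mul_apply]
  have hdl := Matrix.det_add_mul (A := B) (Matrix.replicateCol (Fin 1) (-v)) (Matrix.replicateRow (Fin 1) v)
    hdetB.ne'.isUnit
  rw [← hAeq] at hdl
  rw [show Matrix.replicateRow (Fin 1) v * B⁻¹ * Matrix.replicateCol (Fin 1) (-v)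
        = Matrix.replicateRow (Fin 1) v * Matrix.replicateCol (Fin 1) (B⁻¹ *ᵥ (-v)) from by
      rw [Matrix.replicateCol_mulVec, Matrix.mul_assoc]] at hdl
  have hdl2 : A.det = B.det * (1 - v ⬝ᵥ B⁻¹ *ᵥ v) := by
    rw [hdl]
    congr 1
    simp only [Matrix.det_fin_one, Matrix.add_apply, Matrix.one_apply_eq,
      Matrix.replicateRow_mul_replicateCol_apply, Matrix.mulVec_neg, dotProduct_neg]
    ring
  -- so v ⬝ᵥ B⁻¹ *ᵥ v = 1 - det A / det B
  have hterm : v ⬝ᵥ B⁻¹ *ᵥ v = 1 - A.det / B.det := by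
    have h1 : A.det / B.det = 1 - v ⬝ᵥ B⁻¹ *ᵥ v := by
      rw [hdl2, mul_comm, mul_div_assoc, div_self hdetB.ne', mul_one]
    linarith
  rw [hterm]
  have hlog := Real.log_le_sub_one_of_pos (div_pos hdetA hdetB)
  rw [Real.log_div hdetA.ne' hdetB.ne'] at hlog
  linarith

theorem stmt_7 {T d : ℕ} (x : Fin T → Fin d → ℝ) :
    ∑ t, x t ⬝ᵥ
        (((∑ s ∈ Finset.univ.filter (fun s => s ≤ t), vecMulVec (x s) (x s))
            + (1 : Matrix (Fin d) (Fin d) ℝ))⁻¹ *ᵥ x t) ≤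
      Real.log (((∑ s, vecMulVec (x s) (x s)) + (1 : Matrix (Fin d) (Fin d) ℝ)).det) := by
  set W : ℕ → Matrix (Fin d) (Fin d) ℝ := fun n =>
    (∑ s ∈ Finset.univ.filter (fun s : Fin T => (s : ℕ) < n), vecMulVec (x s) (x s))
      + (1 : Matrix (Fin d) (Fin d) ℝ) with hW
  have hWpd : ∀ n, (W n).PosDef := by
    intro n
    apply Matrix.PosDef.posSemidef_add _ Matrix.PosDef.one
    apply Finset.sum_induction _ _ (fun a b ha hb => ha.add hb)
    · exact Matrix.PosSemidef.zero
    · intro s _; exact vecMulVec_posSemidef (x s)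
  have hsucc : ∀ t : Fin T, W ((t : ℕ) + 1) = W (t : ℕ) + vecMulVec (x t) (x t) := by
    intro t
    have hset : Finset.univ.filter (fun s : Fin T => (s : ℕ) < (t : ℕ) + 1)
        = insert t (Finset.univ.filter (fun s : Fin T => (s : ℕ) < (t : ℕ))) := by
      ext s
      simp [Nat.lt_succ_iff_lt_or_eq, Fin.val_eq_val, or_comm, le_iff_eq_or_lt]
    have hnotmem : t ∉ Finset.univ.filter (fun s : Fin T => (s : ℕ) < (t : ℕ)) := by
      simp only [Finset.mem_filter, Finset.mem_univ, true_and]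
      exact lt_irrefl _
    simp only [hW]
    rw [hset, Finset.sum_insert hnotmem]
    abel
  have hVt : ∀ t : Fin T,
      ((∑ s ∈ Finset.univ.filter (fun s => s ≤ t), vecMulVec (x s) (x s))
          + (1 : Matrix (Fin d) (Fin d) ℝ)) = W ((t : ℕ) + 1) := by
    intro t
    simp only [hW]
    congr 1
    apply Finset.sum_congr _ (fun _ _ => rfl)
    ext s
    simp only [Finset.mem_filter, Finset.mem_univ, true_and, Nat.lt_succ_iff, Fin.le_def]
  have hWT : ((∑ s, vecMulVec (x s) (x s)) + (1 : Matrix (Fin d) (Fin d) ℝ)) = W T := by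
    simp only [hW]
    congr 1
    apply Finset.sum_congr _ (fun _ _ => rfl)
    ext s
    simp only [Finset.mem_filter, Finset.mem_univ, true_and, true_iff]
    exact s.isLt
  rw [hWT]
  calc ∑ t, x t ⬝ᵥ
        (((∑ s ∈ Finset.univ.filter (fun s => s ≤ t), vecMulVec (x s) (x s))
            + (1 : Matrix (Fin d) (Fin d) ℝ))⁻¹ *ᵥ x t)
      ≤ ∑ t : Fin T, (Real.log (W ((t : ℕ) + 1)).det - Real.log (W (t : ℕ)).det) := by
        apply Finset.sum_le_sum
        intro t _
        rw [hVt t, hsucc t]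
        exact key_step (W (t : ℕ)) (hWpd _) (x t)
    _ = Real.log (W T).det := by
        rw [Fin.sum_univ_eq_sum_range (fun n => Real.log (W (n + 1)).det - Real.log (W n).det),
          Finset.sum_range_sub (fun n => Real.log (W n).det)]
        have : W 0 = 1 := by simp [hW]
        simp [this]
end

section
/- Let K be an n×n positive semidefinite matrix, D an invertible n×n diagonal matrix with diagonal entries d_i satisfying d_i² ≤ c for all i, and α > 0. Then Tr(D K D (D K D + α I)⁻¹) ≤ Tr(K (K + (α/c) I)⁻¹). -/
open Matrix



lemma trace_nonneg_of_psd {M : Matrix (Fin n) (Fin n) ℝ} (hM : M.PosSemidef) :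
    0 ≤ M.trace := by
  have h : ∀ i, 0 ≤ M i i := by
    intro i
    have := hM.dotProduct_mulVec_nonneg (Pi.single i 1)
    simpa [dotProduct, mulVec, Pi.single_apply, Finset.sum_ite_eq] using this
  exact Finset.sum_nonneg fun i _ => h i

lemma smul_one_posDef {α : ℝ} (hα : 0 < α) :
    (α • (1 : Matrix (Fin n) (Fin n) ℝ)).PosDef := by
  rw [smul_one_eq_diagonal]
  exact posDef_diagonal_iff.mpr fun i => hα


open scoped MatrixOrder in
lemma inv_sub_inv_psd {A B : Matrix (Fin n) (Fin n) ℝ}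
    (hA : A.PosDef) (hB : B.PosDef) (hBA : (B - A).PosSemidef) :
    (A⁻¹ - B⁻¹).PosSemidef := by
  set S := CFC.sqrt A with hSdef
  have hSpsd : S.PosSemidef := (CFC.sqrt_nonneg A).posSemidef
  have hSh : S.IsHermitian := hSpsd.1
  have hSS : S * S = A := CFC.sqrt_mul_sqrt_self A hA.posSemidef.nonneg
  have hSu : IsUnit S.det := by
    have h : S.det * S.det = A.det := by rw [← det_mul, hSS]
    exact isUnit_iff_ne_zero.mpr (fun h0 => hA.det_pos.ne' (by rw [← h, h0, zero_mul]))
  have hBu : IsUnit B.det := isUnit_iff_ne_zero.mpr hB.det_pos.ne'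
  have hSinv : S * S⁻¹ = 1 := mul_nonsing_inv S hSu
  have hSinv' : S⁻¹ * S = 1 := nonsing_inv_mul S hSu
  have hSih : (S⁻¹).IsHermitian := hSh.inv
  set C := S⁻¹ * B * S⁻¹ with hCdef
  have hCpsd : C.PosSemidef := by
    have := hB.posSemidef.conjTranspose_mul_mul_same S⁻¹
    rwa [hSih.eq] at this
  have hAinv : S⁻¹ * S⁻¹ = A⁻¹ := by rw [← Matrix.mul_inv_rev, hSS]
  have hSAS : S⁻¹ * A * S⁻¹ = 1 := by
    rw [← hSS]
    calc S⁻¹ * (S * S) * S⁻¹ = (S⁻¹ * S) * (S * S⁻¹) := by simp only [Matrix.mul_assoc]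
      _ = 1 := by rw [hSinv, hSinv', Matrix.one_mul]
  have hC1 : C - 1 = S⁻¹ * (B - A) * S⁻¹ := by
    rw [Matrix.mul_sub, Matrix.sub_mul, hSAS]
  have hC1psd : (C - 1).PosSemidef := by
    rw [hC1]
    have := hBA.conjTranspose_mul_mul_same S⁻¹
    rwa [hSih.eq] at this
  have hCinv : C⁻¹ = S * B⁻¹ * S := by
    apply inv_eq_right_inv
    have hBinv : B * B⁻¹ = 1 := mul_nonsing_inv B hBu
    calc S⁻¹ * B * S⁻¹ * (S * B⁻¹ * S)
        = S⁻¹ * (B * ((S⁻¹ * S) * B⁻¹)) * S := by simp only [Matrix.mul_assoc]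
      _ = 1 := by rw [hSinv', Matrix.one_mul, hBinv, Matrix.mul_one, hSinv']
  set T := CFC.sqrt C with hTdef
  have hTpsd : T.PosSemidef := (CFC.sqrt_nonneg C).posSemidef
  have hTh : T.IsHermitian := hTpsd.1
  have hTT : T * T = C := CFC.sqrt_mul_sqrt_self C hCpsd.nonneg
  have hCu : IsUnit C.det := by
    have h1 : C.det = S⁻¹.det * B.det * S⁻¹.det := by rw [hCdef, det_mul, det_mul]
    have h2 : IsUnit S⁻¹.det := isUnit_nonsing_inv_det S hSu
    rw [h1]
    exact (h2.mul hBu).mul h2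
  have hTu : IsUnit T.det := by
    have h : T.det * T.det = C.det := by rw [← det_mul, hTT]
    exact isUnit_iff_ne_zero.mpr (fun h0 => hCu.ne_zero (by rw [← h, h0, zero_mul]))
  have hTinv : T * T⁻¹ = 1 := mul_nonsing_inv T hTu
  have hTinv' : T⁻¹ * T = 1 := nonsing_inv_mul T hTu
  have hTih : (T⁻¹).IsHermitian := hTh.inv
  have hCinv2 : T⁻¹ * T⁻¹ = C⁻¹ := by rw [← Matrix.mul_inv_rev, hTT]
  have hTCT : T⁻¹ * C * T⁻¹ = 1 := by
    rw [← hTT]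
    calc T⁻¹ * (T * T) * T⁻¹ = (T⁻¹ * T) * (T * T⁻¹) := by simp only [Matrix.mul_assoc]
      _ = 1 := by rw [hTinv, hTinv', Matrix.one_mul]
  have h1C : (1 : Matrix (Fin n) (Fin n) ℝ) - C⁻¹ = T⁻¹ * (C - 1) * T⁻¹ := by
    rw [Matrix.mul_sub, Matrix.sub_mul, hTCT, Matrix.mul_one, hCinv2]
  have h1Cpsd : ((1 : Matrix (Fin n) (Fin n) ℝ) - C⁻¹).PosSemidef := by
    rw [h1C]
    have := hC1psd.conjTranspose_mul_mul_same T⁻¹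
    rwa [hTih.eq] at this
  have hSCS : S⁻¹ * C⁻¹ * S⁻¹ = B⁻¹ := by
    rw [hCinv]
    calc S⁻¹ * (S * B⁻¹ * S) * S⁻¹ = (S⁻¹ * S) * B⁻¹ * (S * S⁻¹) := by
          simp only [Matrix.mul_assoc]
      _ = B⁻¹ := by rw [hSinv, hSinv', Matrix.one_mul, Matrix.mul_one]
  have hfinal : A⁻¹ - B⁻¹ = S⁻¹ * (1 - C⁻¹) * S⁻¹ := by
    rw [Matrix.mul_sub, Matrix.sub_mul, hSCS, Matrix.mul_one, hAinv]
  rw [hfinal]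
  have := h1Cpsd.conjTranspose_mul_mul_same S⁻¹
  rwa [hSih.eq] at this


lemma trace_AB_eq_trace_BA (A B : Matrix (Fin n) (Fin n) ℝ) (α : ℝ)
    (h1 : IsUnit (A * B + α • (1 : Matrix (Fin n) (Fin n) ℝ)).det)
    (h2 : IsUnit (B * A + α • (1 : Matrix (Fin n) (Fin n) ℝ)).det) :
    (A * B * (A * B + α • 1)⁻¹).trace = (B * A * (B * A + α • 1)⁻¹).trace := by
  set S := A * B + α • (1 : Matrix (Fin n) (Fin n) ℝ) with hS
  set T := B * A + α • (1 : Matrix (Fin n) (Fin n) ℝ) with hT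
  have hinter : A * T = S * A := by
    rw [hS, hT, Matrix.mul_add, Matrix.add_mul, ← Matrix.mul_assoc, Matrix.mul_smul,
      Matrix.smul_mul, Matrix.mul_one, Matrix.one_mul]
  have hkey : A * T⁻¹ = S⁻¹ * A := by
    have : S⁻¹ * (A * T) * T⁻¹ = S⁻¹ * (S * A) * T⁻¹ := by rw [hinter]
    calc A * T⁻¹ = (S⁻¹ * S) * A * T⁻¹ := by rw [nonsing_inv_mul S h1, Matrix.one_mul]
      _ = S⁻¹ * (S * A) * T⁻¹ := by simp only [Matrix.mul_assoc]
      _ = S⁻¹ * (A * T) * T⁻¹ := by rw [hinter]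
      _ = S⁻¹ * A * (T * T⁻¹) := by simp only [Matrix.mul_assoc]
      _ = S⁻¹ * A := by rw [mul_nonsing_inv T h2, Matrix.mul_one]
  calc (A * B * S⁻¹).trace = (A * (B * S⁻¹)).trace := by rw [Matrix.mul_assoc]
    _ = ((B * S⁻¹) * A).trace := trace_mul_comm _ _
    _ = (B * (S⁻¹ * A)).trace := by rw [Matrix.mul_assoc]
    _ = (B * (A * T⁻¹)).trace := by rw [hkey]
    _ = (B * A * T⁻¹).trace := by rw [Matrix.mul_assoc]


lemma trace_shift_eq (X : Matrix (Fin n) (Fin n) ℝ) (α : ℝ)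
    (hu : IsUnit (X + α • (1 : Matrix (Fin n) (Fin n) ℝ)).det) :
    (X * (X + α • 1)⁻¹).trace = (n : ℝ) - α * ((X + α • 1)⁻¹).trace := by
  have key : X * (X + α • 1)⁻¹ = 1 - α • (X + α • (1 : Matrix (Fin n) (Fin n) ℝ))⁻¹ := by
    have h := mul_nonsing_inv _ hu
    calc X * (X + α • 1)⁻¹
        = ((X + α • 1) - α • 1) * (X + α • 1)⁻¹ := by rw [add_sub_cancel_right]
      _ = (X + α • 1) * (X + α • 1)⁻¹ - (α • (1:Matrix (Fin n) (Fin n) ℝ)) * (X + α • 1)⁻¹ := by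
          rw [Matrix.sub_mul]
      _ = 1 - α • (X + α • 1)⁻¹ := by rw [h, Matrix.smul_mul, Matrix.one_mul]
  rw [key, trace_sub, trace_smul, trace_one]
  simp


open scoped MatrixOrder in
set_option maxHeartbeats 1000000 in
theorem stmt_9 {n : ℕ} (K : Matrix (Fin n) (Fin n) ℝ) (hK : K.PosSemidef)
    (d : Fin n → ℝ) (hd : ∀ i, d i ≠ 0) (c : ℝ) (hc : 0 < c)
    (hdc : ∀ i, d i ^ 2 ≤ c) (α : ℝ) (hα : 0 < α) :
    (Matrix.diagonal d * K * Matrix.diagonal d *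
        (Matrix.diagonal d * K * Matrix.diagonal d
          + α • (1 : Matrix (Fin n) (Fin n) ℝ))⁻¹).trace ≤
      (K * (K + (α / c) • (1 : Matrix (Fin n) (Fin n) ℝ))⁻¹).trace := by
  set DD := Matrix.diagonal d with hDD
  set S := CFC.sqrt K with hSdef
  have hSpsd : S.PosSemidef := (CFC.sqrt_nonneg K).posSemidef
  have hSh : S.IsHermitian := hSpsd.1
  have hSS : S * S = K := CFC.sqrt_mul_sqrt_self K hK.nonneg
  have hDDh : DD.IsHermitian := isHermitian_diagonal d
  set M := S * (DD * DD) * S with hM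
  have hDD2psd : (DD * DD).PosSemidef := by
    rw [hDD, diagonal_mul_diagonal]
    exact posSemidef_diagonal_iff.mpr fun i => mul_self_nonneg _
  have hMpsd : M.PosSemidef := by
    have := hDD2psd.conjTranspose_mul_mul_same S
    rwa [hSh.eq] at this
  have hDKDpsd : (DD * K * DD).PosSemidef := by
    have := hK.mul_mul_conjTranspose_same DD
    rwa [hDDh.eq] at this
  -- rewrite DKD and M as products AB / BA
  have e1 : DD * K * DD = (DD * S) * (S * DD) := by
    rw [← hSS]; simp only [Matrix.mul_assoc]
  have e2 : M = (S * DD) * (DD * S) := by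
    rw [hM]; simp only [Matrix.mul_assoc]
  -- positive definiteness of shifted matrices
  have hone : (α • (1 : Matrix (Fin n) (Fin n) ℝ)).PosDef := by
    rw [smul_one_eq_diagonal]
    exact posDef_diagonal_iff.mpr fun i => hα
  have hDKDpd : (DD * K * DD + α • (1 : Matrix (Fin n) (Fin n) ℝ)).PosDef :=
    Matrix.PosDef.posSemidef_add hDKDpsd hone
  have hMpd : (M + α • (1 : Matrix (Fin n) (Fin n) ℝ)).PosDef := Matrix.PosDef.posSemidef_add hMpsd hone
  have hDKDu : IsUnit (DD * K * DD + α • (1 : Matrix (Fin n) (Fin n) ℝ)).det :=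
    isUnit_iff_ne_zero.mpr hDKDpd.det_pos.ne'
  have hMu : IsUnit (M + α • (1 : Matrix (Fin n) (Fin n) ℝ)).det :=
    isUnit_iff_ne_zero.mpr hMpd.det_pos.ne'
  -- Step 1: trace identity
  have step1 : (DD * K * DD * (DD * K * DD + α • (1 : Matrix (Fin n) (Fin n) ℝ))⁻¹).trace
      = (M * (M + α • (1 : Matrix (Fin n) (Fin n) ℝ))⁻¹).trace := by
    rw [e1, e2]
    exact trace_AB_eq_trace_BA (DD * S) (S * DD) α (by rwa [← e1]) (by rwa [← e2])
  -- N := c • K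
  set N := c • K with hN
  have hNpsd : N.PosSemidef := by
    refine .of_dotProduct_mulVec_nonneg ?_ fun x => ?_
    · rw [hN, Matrix.IsHermitian, conjTranspose_smul, hK.1.eq]
      rfl
    · rw [hN, smul_mulVec, dotProduct_smul, smul_eq_mul]
      exact mul_nonneg hc.le (hK.dotProduct_mulVec_nonneg x)
  have hNpd : (N + α • (1 : Matrix (Fin n) (Fin n) ℝ)).PosDef := Matrix.PosDef.posSemidef_add hNpsd hone
  have hNu : IsUnit (N + α • (1 : Matrix (Fin n) (Fin n) ℝ)).det :=
    isUnit_iff_ne_zero.mpr hNpd.det_pos.ne'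
  -- Step 2: N - M is PSD
  have hNM : (N - M).PosSemidef := by
    have hdiagpsd : ((c • (1 : Matrix (Fin n) (Fin n) ℝ)) - DD * DD).PosSemidef := by
      rw [hDD, diagonal_mul_diagonal, smul_one_eq_diagonal, diagonal_sub]
      refine posSemidef_diagonal_iff.mpr fun i => ?_
      have := hdc i
      rw [pow_two] at this
      linarith
    have hconj := hdiagpsd.conjTranspose_mul_mul_same S
    rw [hSh.eq] at hconj
    have : S * ((c • (1 : Matrix (Fin n) (Fin n) ℝ)) - DD * DD) * S = N - M := by
      rw [Matrix.mul_sub, Matrix.sub_mul, hM, hN]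
      congr 1
      rw [Matrix.mul_smul, Matrix.mul_one, Matrix.smul_mul, hSS]
    rwa [this] at hconj
  -- Step 3: compare traces of inverses
  have hdiffpsd : ((N + α • (1 : Matrix (Fin n) (Fin n) ℝ))
      - (M + α • (1 : Matrix (Fin n) (Fin n) ℝ))).PosSemidef := by
    rwa [add_sub_add_right_eq_sub]
  have hinvdiff := inv_sub_inv_psd hMpd hNpd hdiffpsd
  have htr : ((N + α • (1 : Matrix (Fin n) (Fin n) ℝ))⁻¹).trace
      ≤ ((M + α • (1 : Matrix (Fin n) (Fin n) ℝ))⁻¹).trace := by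
    have := trace_nonneg_of_psd hinvdiff
    rw [trace_sub] at this
    linarith
  -- Step 4: main inequality in terms of M and N
  have step4 : (M * (M + α • (1 : Matrix (Fin n) (Fin n) ℝ))⁻¹).trace
      ≤ (N * (N + α • (1 : Matrix (Fin n) (Fin n) ℝ))⁻¹).trace := by
    rw [trace_shift_eq M α hMu, trace_shift_eq N α hNu]
    nlinarith [htr]
  -- Step 5: rewrite RHS
  set X := K + (α / c) • (1 : Matrix (Fin n) (Fin n) ℝ) with hX
  have hXpd : X.PosDef := Matrix.PosDef.posSemidef_add hK (by
    rw [smul_one_eq_diagonal]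
    exact posDef_diagonal_iff.mpr fun i => div_pos hα hc)
  have hXu : IsUnit X.det := isUnit_iff_ne_zero.mpr hXpd.det_pos.ne'
  have hNX : N + α • (1 : Matrix (Fin n) (Fin n) ℝ) = c • X := by
    rw [hX, hN, smul_add, smul_smul, mul_div_cancel₀ _ hc.ne']
  have hcXinv : (c • X)⁻¹ = c⁻¹ • X⁻¹ := by
    apply inv_eq_right_inv
    rw [Matrix.smul_mul, Matrix.mul_smul, smul_smul, mul_nonsing_inv _ hXu,
      mul_inv_cancel₀ hc.ne', one_smul]
  have step5 : (N * (N + α • (1 : Matrix (Fin n) (Fin n) ℝ))⁻¹).trace = (K * X⁻¹).trace := by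
    rw [hNX, hcXinv, hN, Matrix.smul_mul, Matrix.mul_smul, smul_smul,
      mul_inv_cancel₀ hc.ne', one_smul]
  calc (DD * K * DD * (DD * K * DD + α • (1 : Matrix (Fin n) (Fin n) ℝ))⁻¹).trace
      = (M * (M + α • (1 : Matrix (Fin n) (Fin n) ℝ))⁻¹).trace := step1
    _ ≤ (N * (N + α • (1 : Matrix (Fin n) (Fin n) ℝ))⁻¹).trace := step4
    _ = (K * X⁻¹).trace := step5
end

section
/- Let φ₁,…,φ_t be unit-norm vectors, Φ_s the matrix with columns φ₁,…,φ_s, α > 0, and S_s a diagonal selection matrix such that Φ_s S_s S_sᵀ Φ_sᵀ ⪯ Φ_t Φ_tᵀ + ε(Φ_t Φ_tᵀ + αI) for some ε ≥ 0 (where S_s is zero-padded to size t). Then for any s ≤ t, the estimated leverage score (1+ε)·φ_sᵀ(Φ_s S_s S_sᵀ Φ_sᵀ + αI)⁻¹ φ_s is at least the true leverage score φ_sᵀ(Φ_t Φ_tᵀ + αI)⁻¹ φ_s. -/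
open Matrix

lemma psd_vecMulVec {D : ℕ} (x : Fin D → ℝ) : (vecMulVec x x).PosSemidef := by
  refine Matrix.PosSemidef.of_dotProduct_mulVec_nonneg ?_ ?_
  · ext i j; simp [vecMulVec_apply, mul_comm]
  · intro v
    have : v ⬝ᵥ (vecMulVec x x *ᵥ v) = (x ⬝ᵥ v) * (x ⬝ᵥ v) := by
      simp [dotProduct, vecMulVec_apply, mulVec, Finset.sum_mul, Finset.mul_sum]
      rw [Finset.sum_comm]
      apply Finset.sum_congr rfl; intro i _
      apply Finset.sum_congr rfl; intro j _
      ring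
    rw [show star v = v from rfl, this]
    exact mul_self_nonneg _

lemma psd_smul {D : ℕ} {M : Matrix (Fin D) (Fin D) ℝ} (r : ℝ) (hr : 0 ≤ r)
    (h : M.PosSemidef) : (r • M).PosSemidef := by
  refine Matrix.PosSemidef.of_dotProduct_mulVec_nonneg ?_ ?_
  · exact by ext i j; have := congrFun (congrFun h.1 i) j; simp at this ⊢; simp [this]
  · intro v
    have := h.dotProduct_mulVec_nonneg v
    simp only [smul_mulVec, dotProduct_smul] at *
    exact smul_nonneg hr this

lemma key_inv_mono {D : ℕ} {M N : Matrix (Fin D) (Fin D) ℝ}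
    (hM : M.PosDef) (hN : N.PosDef) (h : (N - M).PosSemidef) (v : Fin D → ℝ) :
    v ⬝ᵥ (N⁻¹ *ᵥ v) ≤ v ⬝ᵥ (M⁻¹ *ᵥ v) := by
  set x := N⁻¹ *ᵥ v with hx
  set u := M⁻¹ *ᵥ v with hu
  have hNx : N *ᵥ x = v := by
    rw [hx, mulVec_mulVec, Matrix.mul_nonsing_inv _ hN.det_pos.ne'.isUnit, one_mulVec]
  have hMu : M *ᵥ u = v := by
    rw [hu, mulVec_mulVec, Matrix.mul_nonsing_inv _ hM.det_pos.ne'.isUnit, one_mulVec]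
  have hMsym : Mᵀ = M := hM.1
  have h1 : (0:ℝ) ≤ (x - u) ⬝ᵥ (M *ᵥ (x - u)) := by
    have := hM.posSemidef.dotProduct_mulVec_nonneg (x - u)
    simpa using this
  have h2 : x ⬝ᵥ (M *ᵥ x) ≤ x ⬝ᵥ (N *ᵥ x) := by
    have := h.dotProduct_mulVec_nonneg x
    simp only [sub_mulVec, dotProduct_sub, show star x = x from rfl] at this
    linarith
  have hsymm : u ⬝ᵥ (M *ᵥ x) = v ⬝ᵥ x := by
    rw [dotProduct_mulVec, ← mulVec_transpose, hMsym, hMu]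
  have hxv : x ⬝ᵥ (N *ᵥ x) = x ⬝ᵥ v := by rw [hNx]
  have hexp : (x - u) ⬝ᵥ (M *ᵥ (x - u))
      = x ⬝ᵥ (M *ᵥ x) - x ⬝ᵥ v - v ⬝ᵥ x + u ⬝ᵥ v := by
    rw [mulVec_sub, dotProduct_sub, sub_dotProduct, sub_dotProduct, hMu, hsymm]
    ring
  have hc1 : x ⬝ᵥ v = v ⬝ᵥ x := dotProduct_comm _ _
  have hc2 : u ⬝ᵥ v = v ⬝ᵥ u := dotProduct_comm _ _
  linarith [h1, h2, hexp, hxv]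

lemma pd_smul_one {D : ℕ} {α : ℝ} (hα : 0 < α) :
    (α • (1 : Matrix (Fin D) (Fin D) ℝ)).PosDef := by
  refine Matrix.PosDef.of_dotProduct_mulVec_pos ?_ ?_
  · ext i j
    by_cases h : i = j
    · subst h; simp
    · simp only [conjTranspose_apply, Matrix.smul_apply, Matrix.one_apply, star_trivial]
      rw [if_neg h, if_neg (fun hji : j = i => h hji.symm)]
  · intro x hx
    have h1 := (Matrix.PosDef.one (n := Fin D) (R := ℝ)).dotProduct_mulVec_pos hx
    simpa [smul_mulVec] using mul_pos hα h1

lemma psd_sum {D T : ℕ} (f : Fin T → Matrix (Fin D) (Fin D) ℝ)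
    (hf : ∀ i, (f i).PosSemidef) : (∑ i, f i).PosSemidef :=
  Finset.sum_induction f Matrix.PosSemidef
    (fun _ _ ha hb => ha.add hb) Matrix.PosSemidef.zero (fun i _ => hf i)

theorem stmt_18 {T D : ℕ} (φ : Fin T → Fin D → ℝ)
    (hφ : ∀ i, φ i ⬝ᵥ φ i = 1) (α ε : ℝ) (hα : 0 < α) (hε : 0 ≤ ε)
    (w : Fin T → ℝ) (hw : ∀ i, 0 ≤ w i) (s : Fin T)
    (hsupp : ∀ i, s < i → w i = 0)
    (P : Matrix (Fin D) (Fin D) ℝ)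
    (hP : P = ∑ i, w i • vecMulVec (φ i) (φ i))
    (A : Matrix (Fin D) (Fin D) ℝ)
    (hA : A = ∑ i, vecMulVec (φ i) (φ i))
    (happrox : (A + ε • (A + α • (1 : Matrix (Fin D) (Fin D) ℝ)) - P).PosSemidef) :
    φ s ⬝ᵥ ((A + α • (1 : Matrix (Fin D) (Fin D) ℝ))⁻¹ *ᵥ φ s) ≤
      (1 + ε) * (φ s ⬝ᵥ ((P + α • (1 : Matrix (Fin D) (Fin D) ℝ))⁻¹ *ᵥ φ s)) := by
  have hAps : A.PosSemidef := hA ▸ psd_sum _ fun i => psd_vecMulVec (φ i)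
  have hPps : P.PosSemidef := hP ▸ psd_sum _ fun i => psd_smul _ (hw i) (psd_vecMulVec (φ i))
  have hA' : (A + α • (1 : Matrix (Fin D) (Fin D) ℝ)).PosDef :=
    Matrix.PosDef.posSemidef_add hAps (pd_smul_one hα)
  have hP' : (P + α • (1 : Matrix (Fin D) (Fin D) ℝ)).PosDef :=
    Matrix.PosDef.posSemidef_add hPps (pd_smul_one hα)
  have h1ε : (0:ℝ) < 1 + ε := by linarith
  set M := (1 + ε)⁻¹ • (P + α • (1 : Matrix (Fin D) (Fin D) ℝ)) with hM
  have hMpd : M.PosDef := by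
    refine Matrix.PosDef.of_dotProduct_mulVec_pos (psd_smul _ (le_of_lt (inv_pos.2 h1ε)) hP'.posSemidef).1 fun x hx => ?_
    have h2 := hP'.dotProduct_mulVec_pos hx
    rw [hM, smul_mulVec, dotProduct_smul, smul_eq_mul]
    exact mul_pos (inv_pos.2 h1ε) h2
  have hdiff : ((A + α • (1 : Matrix (Fin D) (Fin D) ℝ)) - M).PosSemidef := by
    have hmul : (1 + ε) • ((A + α • (1 : Matrix (Fin D) (Fin D) ℝ)) - M)
        = A + ε • (A + α • (1 : Matrix (Fin D) (Fin D) ℝ)) - P := by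
      rw [hM, smul_sub, smul_smul, mul_inv_cancel₀ h1ε.ne', one_smul]
      module
    have heq : (A + α • (1 : Matrix (Fin D) (Fin D) ℝ)) - M
        = (1 + ε)⁻¹ • (A + ε • (A + α • (1 : Matrix (Fin D) (Fin D) ℝ)) - P) := by
      rw [← hmul, smul_smul, inv_mul_cancel₀ h1ε.ne', one_smul]
    rw [heq]
    exact psd_smul _ (le_of_lt (inv_pos.2 h1ε)) happrox
  have key := key_inv_mono hMpd hA' hdiff (φ s)
  have hMinv : M⁻¹ = (1 + ε) • (P + α • (1 : Matrix (Fin D) (Fin D) ℝ))⁻¹ := by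
    rw [hM]
    haveI : Invertible ((1+ε)⁻¹ : ℝ) := invertibleOfNonzero (inv_ne_zero h1ε.ne')
    rw [Matrix.inv_smul (k := (1 + ε)⁻¹) (A := P + α • (1 : Matrix (Fin D) (Fin D) ℝ)) hP'.det_pos.ne'.isUnit, invOf_eq_inv, inv_inv]
  rw [hMinv] at key
  simpa [smul_mulVec, dotProduct_smul, smul_eq_mul] using key
end
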